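/- If φ = f/g where f and g are Blaschke products of degrees d_f and d_g, and the Pick matrix of φ at points λ_1,...,λ_N ∈ 𝔻 (at which g does not vanish) has π positive and ν negative eigenvalues, then d_f ≥ π and d_g ≥ ν. -/

import Mathlib

/-- A finite Blaschke product with unimodular constant `c` and zeros `a k`. -/
noncomputable def blaschke {m : ℕ} (c : ℂ) (a : Fin m → ℂ) : ℂ → ℂ :=
  fun z => c * ∏ k, (z - a k) / (1 - (starRingEnd ℂ) (a k) * z)

/-- The Pick matrix of φ at the nodes l i. -/
noncomputable def pickMatrix {N : ℕ} (φ : ℂ → ℂ) (l : Fin N → ℂ) :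
    Matrix (Fin N) (Fin N) ℂ :=
  Matrix.of fun i j => (1 - φ (l i) * star (φ (l j))) / (1 - l i * star (l j))

/-- number of positive eigenvalues (with multiplicity) of a Hermitian matrix -/
noncomputable def posCount {n : Type*} [Fintype n] [DecidableEq n]
    {A : Matrix n n ℂ} (hA : A.IsHermitian) : ℕ :=
  (Finset.univ.filter fun i => 0 < hA.eigenvalues i).card

/-- number of negative eigenvalues -/
noncomputable def negCount {n : Type*} [Fintype n] [DecidableEq n]
    {A : Matrix n n ℂ} (hA : A.IsHermitian) : ℕ :=
  (Finset.univ.filter fun i => hA.eigenvalues i < 0).card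

open Matrix Finset

lemma my_dotProduct_sum {ι n : Type*} [Fintype n] (s : Finset ι) (u : n → ℂ) (f : ι → n → ℂ) :
    u ⬝ᵥ (∑ i ∈ s, f i) = ∑ i ∈ s, u ⬝ᵥ f i := by
  simp only [dotProduct, Finset.sum_apply, Finset.mul_sum]
  rw [Finset.sum_comm]

lemma my_sum_dotProduct {ι n : Type*} [Fintype n] (s : Finset ι) (f : ι → n → ℂ) (u : n → ℂ) :
    (∑ i ∈ s, f i) ⬝ᵥ u = ∑ i ∈ s, f i ⬝ᵥ u := by
  simp only [dotProduct, Finset.sum_apply, Finset.sum_mul]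
  rw [Finset.sum_comm]

lemma card_le_of_quadform {N M : ℕ} {P : Matrix (Fin N) (Fin N) ℂ} (hP : P.IsHermitian)
    (W : Matrix (Fin N) (Fin M) ℂ) (ε : ℝ) (S : Finset (Fin N))
    (hS : ∀ i ∈ S, 0 < ε * hP.eigenvalues i)
    (h : ∀ x : Fin N → ℂ, Wᴴ *ᵥ x = 0 → ε * (star x ⬝ᵥ (P *ᵥ x)).re ≤ 0) :
    S.card ≤ M := by
  by_contra hlt
  push_neg at hlt
  set v : Fin N → (Fin N → ℂ) := fun i => ⇑(hP.eigenvectorBasis i) with hv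
  let L : (S → ℂ) →ₗ[ℂ] (Fin M → ℂ) :=
    { toFun := fun c => Wᴴ *ᵥ (∑ i : S, c i • v i)
      map_add' := by
        intro c d
        simp [add_smul, Finset.sum_add_distrib, mulVec_add]
      map_smul' := by
        intro r c
        simp only [Pi.smul_apply, smul_eq_mul, mul_smul, ← Finset.smul_sum,
          Matrix.mulVec_smul, RingHom.id_apply] }
  have hker : ∃ c : S → ℂ, c ≠ 0 ∧ L c = 0 := by
    by_contra hc
    push_neg at hc
    have hinj : Function.Injective L := by
      rw [← LinearMap.ker_eq_bot, Submodule.eq_bot_iff]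
      intro c hcmem
      by_contra h0
      exact hc c h0 hcmem
    have hle := LinearMap.finrank_le_finrank_of_injective hinj
    simp only [Module.finrank_pi, Module.finrank_self] at hle
    simp only [Fintype.card_coe, Fintype.card_fin] at hle
    omega
  obtain ⟨c, hc0, hcL⟩ := hker
  set x : Fin N → ℂ := ∑ i : S, c i • v i with hx
  have hWx : Wᴴ *ᵥ x = 0 := hcL
  have horth : ∀ i j : Fin N, star (v i) ⬝ᵥ v j = if i = j then 1 else 0 := by
    intro i j
    have h1 := orthonormal_iff_ite.mp hP.eigenvectorBasis.orthonormal i j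
    rw [EuclideanSpace.inner_eq_star_dotProduct] at h1
    rwa [dotProduct_comm] at h1
  have hsxj : ∀ j : S, star x ⬝ᵥ v j = (starRingEnd ℂ) (c j) := by
    intro j
    rw [hx, star_sum, my_sum_dotProduct]
    have : ∀ i : S, star (c i • v i) ⬝ᵥ v (j : Fin N)
        = (starRingEnd ℂ) (c i) * (if (i : Fin N) = (j : Fin N) then 1 else 0) := by
      intro i
      rw [star_smul, smul_dotProduct, horth]
      rfl
    rw [Finset.sum_congr rfl fun i _ => this i]
    have hite : ∀ i : S, ((i : Fin N) = (j : Fin N)) ↔ (i = j) :=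
      fun i => Subtype.coe_injective.eq_iff
    calc ∑ i : S, (starRingEnd ℂ) (c i) * (if (i : Fin N) = (j : Fin N) then 1 else 0)
        = ∑ i : S, (if i = j then (starRingEnd ℂ) (c i) else 0) := by
          refine Finset.sum_congr rfl fun i _ => ?_
          by_cases hij : i = j <;> simp [hij, hite i]
      _ = (starRingEnd ℂ) (c j) := by simp
  have hPx : P *ᵥ x = ∑ i : S, (c i * (hP.eigenvalues i : ℂ)) • v i := by
    rw [hx]
    rw [show P *ᵥ (∑ i : S, c i • v i) = P.mulVecLin (∑ i : S, c i • v i) from rfl]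
    rw [map_sum]
    refine Finset.sum_congr rfl fun i _ => ?_
    rw [LinearMap.map_smul, mulVecLin_apply, hv, hP.mulVec_eigenvectorBasis]
    funext k
    simp only [Pi.smul_apply, smul_eq_mul, Complex.real_smul]
    ring
  have key : star x ⬝ᵥ (P *ᵥ x)
      = ∑ i : S, ((starRingEnd ℂ) (c i) * c i) * (hP.eigenvalues i : ℂ) := by
    rw [hPx, my_dotProduct_sum]
    refine Finset.sum_congr rfl fun i _ => ?_
    rw [dotProduct_smul, hsxj i]
    simp only [smul_eq_mul]
    ring
  have hre : (star x ⬝ᵥ (P *ᵥ x)).re = ∑ i : S, Complex.normSq (c i) * hP.eigenvalues i := by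
    rw [key, Complex.re_sum]
    refine Finset.sum_congr rfl fun i _ => ?_
    rw [mul_comm ((starRingEnd ℂ) (c i)), Complex.mul_conj, ← Complex.ofReal_mul,
      Complex.ofReal_re]
  have hcon := h x hWx
  rw [hre, Finset.mul_sum] at hcon
  have hpos : 0 < ∑ i ∈ Finset.univ, ε * (Complex.normSq (c i) * hP.eigenvalues (i : Fin N)) := by
    obtain ⟨i0, hi0⟩ : ∃ i0 : S, c i0 ≠ 0 := by
      by_contra hall
      push_neg at hall
      exact hc0 (funext fun i => hall i)
    refine Finset.sum_pos' (fun i _ => ?_) ⟨i0, Finset.mem_univ i0, ?_⟩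
    · have := hS i i.2
      nlinarith [Complex.normSq_nonneg (c i)]
    · have h1 := hS i0 i0.2
      have h2 : 0 < Complex.normSq (c i0) := Complex.normSq_pos.mpr hi0
      nlinarith
  have : (0:ℝ) < 0 := lt_of_lt_of_le (by
      refine lt_of_lt_of_eq hpos ?_
      refine Finset.sum_congr rfl fun i _ => ?_
      ring) hcon
  exact lt_irrefl 0 this

lemma aux_ne {u v : ℂ} (hu : ‖u‖ < 1) (hv : ‖v‖ < 1) :
    1 - u * v ≠ 0 := by
  intro h
  have h1 : u * v = 1 := by linear_combination -h
  have h2 := congrArg (‖·‖) h1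
  rw [norm_mul] at h2
  rw [norm_one] at h2
  nlinarith [norm_nonneg u, norm_nonneg v]

lemma blaschke_pick_exists {m N : ℕ} (c : ℂ) (hc : ‖c‖ = 1) (a : Fin m → ℂ)
    (ha : ∀ k, ‖a k‖ < 1) (l : Fin N → ℂ) (hl : ∀ i, ‖l i‖ < 1) :
    ∃ W : Matrix (Fin N) (Fin m) ℂ, ∀ i j,
      (1 - blaschke c a (l i) * star (blaschke c a (l j))) / (1 - l i * star (l j))
        = (W * Wᴴ) i j := by
  induction m with
  | zero =>
    refine ⟨0, fun i j => ?_⟩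
    have hone : blaschke c a (l i) * star (blaschke c a (l j)) = 1 := by
      simp only [blaschke, Finset.univ_eq_empty, Finset.prod_empty, mul_one]
      rw [show (star c : ℂ) = (starRingEnd ℂ) c from rfl, Complex.mul_conj]
      rw [Complex.normSq_eq_norm_sq, hc]
      norm_num
    rw [hone]
    simp [Matrix.mul_apply]
  | succ m ih =>
    set a0 := a 0 with ha0
    set a' : Fin m → ℂ := fun k => a k.succ with ha'
    obtain ⟨W', hW'⟩ := ih a' (fun k => ha k.succ)
    set s : ℝ := Real.sqrt (1 - Complex.normSq a0) with hs
    set q : ℂ → ℂ := fun z => (s : ℂ) / (1 - (starRingEnd ℂ) a0 * z) with hq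
    set b0 : ℂ → ℂ := fun z => (z - a0) / (1 - (starRingEnd ℂ) a0 * z) with hb0def
    refine ⟨Matrix.of fun i => Fin.cons (q (l i)) (fun k => b0 (l i) * W' i k), fun i j => ?_⟩
    have hsplit : ∀ z, blaschke c a z = b0 z * blaschke c a' z := by
      intro z
      simp only [blaschke, hb0def]
      rw [Fin.prod_univ_succ]
      ring
    have hd : 1 - l i * star (l j) ≠ 0 := by
      refine aux_ne (hl i) ?_
      rw [show (star (l j) : ℂ) = (starRingEnd ℂ) (l j) from rfl, Complex.norm_conj]
      exact hl j
    have hdz : 1 - (starRingEnd ℂ) a0 * l i ≠ 0 := by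
      refine aux_ne ?_ (hl i)
      rw [Complex.norm_conj]; exact ha 0
    have hdw : 1 - (starRingEnd ℂ) a0 * l j ≠ 0 := by
      refine aux_ne ?_ (hl j)
      rw [Complex.norm_conj]; exact ha 0
    have hdw' : 1 - a0 * (starRingEnd ℂ) (l j) ≠ 0 := by
      intro h
      apply hdw
      have := congrArg (starRingEnd ℂ) h
      simpa [mul_comm] using this
    have hss : (s : ℂ) * (s : ℂ) = 1 - (starRingEnd ℂ) a0 * a0 := by
      rw [← Complex.ofReal_mul, hs, Real.mul_self_sqrt]
      · rw [Complex.ofReal_sub, Complex.ofReal_one]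
        rw [Complex.normSq_eq_conj_mul_self]
      · have := ha 0
        rw [← ha0] at this
        have h2 : Complex.normSq a0 = ‖a0‖^2 := (Complex.sq_norm a0).symm
        nlinarith [norm_nonneg a0]
    have hstarb : star (b0 (l j)) = ((starRingEnd ℂ) (l j) - (starRingEnd ℂ) a0)
        / (1 - a0 * (starRingEnd ℂ) (l j)) := by
      simp only [hb0def]
      rw [show (star ((l j - a0) / (1 - (starRingEnd ℂ) a0 * l j)) : ℂ)
        = (starRingEnd ℂ) ((l j - a0) / (1 - (starRingEnd ℂ) a0 * l j)) from rfl]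
      rw [map_div₀]
      simp only [map_sub, _root_.map_mul, Complex.conj_conj]
      rw [show ((starRingEnd ℂ) 1 : ℂ) = 1 from RingHom.map_one _, mul_comm]
    have hstarq : star (q (l j)) = (s:ℂ) / (1 - a0 * (starRingEnd ℂ) (l j)) := by
      simp only [hq]
      rw [show (star ((s:ℂ) / (1 - (starRingEnd ℂ) a0 * l j)) : ℂ)
        = (starRingEnd ℂ) ((s:ℂ) / (1 - (starRingEnd ℂ) a0 * l j)) from rfl]
      rw [map_div₀]
      simp only [map_sub, _root_.map_mul, Complex.conj_conj, Complex.conj_ofReal]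
      rw [show ((starRingEnd ℂ) 1 : ℂ) = 1 from RingHom.map_one _, mul_comm]
    have hqq : q (l i) * star (q (l j))
        = (1 - (starRingEnd ℂ) a0 * a0)
          / ((1 - (starRingEnd ℂ) a0 * l i) * (1 - a0 * (starRingEnd ℂ) (l j))) := by
      rw [hstarq]
      simp only [hq]
      rw [div_mul_div_comm, hss]
    have hb0 : 1 - b0 (l i) * star (b0 (l j))
        = (1 - l i * star (l j)) * (q (l i) * star (q (l j))) := by
      rw [hqq, hstarb]
      simp only [hb0def]
      rw [show (star (l j) : ℂ) = (starRingEnd ℂ) (l j) from rfl]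
      have hdz2 : 1 - l i * (starRingEnd ℂ) a0 ≠ 0 := by rwa [mul_comm]
      field_simp
      ring
    have lhs_eq : (1 - blaschke c a (l i) * star (blaschke c a (l j))) / (1 - l i * star (l j))
        = (1 - b0 (l i) * star (b0 (l j))) / (1 - l i * star (l j))
          + b0 (l i) * star (b0 (l j))
            * ((1 - blaschke c a' (l i) * star (blaschke c a' (l j)))
                / (1 - l i * star (l j))) := by
      rw [hsplit (l i), hsplit (l j)]
      rw [star_mul']
      field_simp
      ring
    rw [lhs_eq, hW' i j, hb0]
    rw [show (1 - l i * star (l j)) * (q (l i) * star (q (l j))) / (1 - l i * star (l j))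
        = q (l i) * star (q (l j)) from mul_div_cancel_left₀ _ hd]
    simp only [Matrix.mul_apply, Matrix.conjTranspose_apply, Matrix.of_apply]
    rw [Fin.sum_univ_succ]
    simp only [Fin.cons_zero, Fin.cons_succ]
    rw [Finset.mul_sum]
    congr 1
    refine Finset.sum_congr rfl fun k _ => ?_
    rw [star_mul']
    ring

lemma quad_nonneg {k : ℕ} (u : Fin k → ℂ) : 0 ≤ (star u ⬝ᵥ u).re := by
  have h : star u ⬝ᵥ u = ((∑ i, Complex.normSq (u i) : ℝ) : ℂ) := by
    rw [Complex.ofReal_sum]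
    refine Finset.sum_congr rfl fun i _ => ?_
    rw [show (star u : Fin k → ℂ) i = (starRingEnd ℂ) (u i) from rfl]
    exact Complex.normSq_eq_conj_mul_self.symm
  rw [h, Complex.ofReal_re]
  exact Finset.sum_nonneg fun i _ => Complex.normSq_nonneg _

/-- if φ = f/g with f, g Blaschke products of degrees m, n without
common zeros, and the Pick matrix of φ at N points of 𝔻 avoiding the zeros of g has
π positive and ν negative eigenvalues, then m ≥ π and n ≥ ν. -/
theorem stmt17 {m n N : ℕ} (cf cg : ℂ) (hcf : ‖cf‖ = 1) (hcg : ‖cg‖ = 1)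
    (a : Fin m → ℂ) (b : Fin n → ℂ)
    (ha : ∀ k, ‖a k‖ < 1) (hb : ∀ l, ‖b l‖ < 1)
    (hdisj : ∀ k l, a k ≠ b l)
    (l : Fin N → ℂ) (hl : ∀ i, ‖l i‖ < 1) (hinj : Function.Injective l)
    (hgz : ∀ i, blaschke cg b (l i) ≠ 0)
    (hPk : (pickMatrix (fun z => blaschke cf a z / blaschke cg b z) l).IsHermitian) :
    posCount hPk ≤ m ∧ negCount hPk ≤ n := by
  obtain ⟨Wf, hWf⟩ := blaschke_pick_exists cf hcf a ha l hl
  obtain ⟨Wg, hWg⟩ := blaschke_pick_exists cg hcg b hb l hl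
  set g : Fin N → ℂ := fun i => blaschke cg b (l i) with hg
  set f : Fin N → ℂ := fun i => blaschke cf a (l i) with hf
  set X : Matrix (Fin N) (Fin m) ℂ := Matrix.of fun i k => (g i)⁻¹ * Wf i k with hX
  set Y : Matrix (Fin N) (Fin n) ℂ := Matrix.of fun i k => (g i)⁻¹ * Wg i k with hY
  have hXij : ∀ i j, (X * Xᴴ) i j = (g i)⁻¹ * star ((g j)⁻¹) * (Wf * Wfᴴ) i j := by
    intro i j
    simp only [Matrix.mul_apply, Matrix.conjTranspose_apply, hX, Matrix.of_apply]
    rw [Finset.mul_sum]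
    refine Finset.sum_congr rfl fun k _ => ?_
    rw [star_mul']
    ring
  have hYij : ∀ i j, (Y * Yᴴ) i j = (g i)⁻¹ * star ((g j)⁻¹) * (Wg * Wgᴴ) i j := by
    intro i j
    simp only [Matrix.mul_apply, Matrix.conjTranspose_apply, hY, Matrix.of_apply]
    rw [Finset.mul_sum]
    refine Finset.sum_congr rfl fun k _ => ?_
    rw [star_mul']
    ring
  have hPdecomp : pickMatrix (fun z => blaschke cf a z / blaschke cg b z) l
      = X * Xᴴ - Y * Yᴴ := by
    ext i j
    rw [Matrix.sub_apply, hXij, hYij, ← hWf i j, ← hWg i j]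
    have hd : 1 - l i * star (l j) ≠ 0 := by
      refine aux_ne (hl i) ?_
      rw [show (star (l j) : ℂ) = (starRingEnd ℂ) (l j) from rfl, Complex.norm_conj]
      exact hl j
    have hgi : g i ≠ 0 := hgz i
    have hgj : (star (g j) : ℂ) ≠ 0 := star_ne_zero.mpr (hgz j)
    simp only [pickMatrix, Matrix.of_apply]
    rw [show (star (f j / g j) : ℂ) = star (f j) / star (g j) from star_div₀ _ _]
    simp only [show ∀ z : ℂ, star z = (starRingEnd ℂ) z from fun z => rfl] at hd hgj ⊢
    have hgj2 : ((starRingEnd ℂ) (g j))⁻¹ ≠ 0 := inv_ne_zero hgj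
    simp only [hf, hg, map_inv₀, map_div₀, map_one] at hgi hgj hgj2 ⊢
    field_simp
    ring
  have hdotY : ∀ x : Fin N → ℂ, star x ⬝ᵥ ((Y * Yᴴ) *ᵥ x)
      = star (Yᴴ *ᵥ x) ⬝ᵥ (Yᴴ *ᵥ x) := by
    intro x
    rw [← Matrix.mulVec_mulVec, Matrix.dotProduct_mulVec, Matrix.star_mulVec,
      Matrix.conjTranspose_conjTranspose]
  have hdotX : ∀ x : Fin N → ℂ, star x ⬝ᵥ ((X * Xᴴ) *ᵥ x)
      = star (Xᴴ *ᵥ x) ⬝ᵥ (Xᴴ *ᵥ x) := by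
    intro x
    rw [← Matrix.mulVec_mulVec, Matrix.dotProduct_mulVec, Matrix.star_mulVec,
      Matrix.conjTranspose_conjTranspose]
  constructor
  · refine card_le_of_quadform hPk X 1 _ (fun i hi => ?_) (fun x hx => ?_)
    · rw [one_mul]
      exact (Finset.mem_filter.mp hi).2
    · rw [one_mul, hPdecomp, Matrix.sub_mulVec, dotProduct_sub]
      rw [hdotX, hdotY, hx]
      have h0 : star (0 : Fin m → ℂ) ⬝ᵥ (0 : Fin m → ℂ) = 0 := by simp
      rw [h0, zero_sub, Complex.neg_re]
      linarith [quad_nonneg (Yᴴ *ᵥ x)]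
  · refine card_le_of_quadform hPk Y (-1) _ (fun i hi => ?_) (fun x hx => ?_)
    · have := (Finset.mem_filter.mp hi).2
      nlinarith
    · rw [hPdecomp, Matrix.sub_mulVec, dotProduct_sub]
      rw [hdotX, hdotY, hx]
      have h0 : star (0 : Fin n → ℂ) ⬝ᵥ (0 : Fin n → ℂ) = 0 := by simp
      rw [h0, sub_zero]
      nlinarith [quad_nonneg (Xᴴ *ᵥ x)]
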